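/- Let a_1, …, a_n be positive real numbers. Then the limit as real z → ∞ of G_n(a+z) - z equals A_n(a), where G_n(a+z) = (∏_{k=1}^n (a_k + z))^{1/n} and A_n(a) = (1/n) ∑_{k=1}^n a_k. -/

import Mathlib

/-- For positive reals `a_1, …, a_n`, `G_n(a+z) - z → A_n(a)` as real `z → ∞`, where
`G_n(a+z) = (∏ (a_k + z))^{1/n}` and `A_n(a) = (∑ a_k)/n`. -/
theorem geometric_mean_shift_limit (n : ℕ) (hn : 0 < n) (a : Fin n → ℝ)
    (ha : ∀ k, 0 < a k) :
    Filter.Tendsto (fun z : ℝ => (∏ k, (a k + z)) ^ ((n : ℝ)⁻¹) - z)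
      Filter.atTop (nhds ((∑ k, a k) / n)) := by
  set f : ℝ → ℝ := fun t => (∏ k, (1 + a k * t)) ^ ((n : ℝ)⁻¹) with hfdef
  have hn' : (n : ℝ) ≠ 0 := Nat.cast_ne_zero.mpr hn.ne'
  -- derivative of the product at 0
  have hprod : HasDerivAt (fun t : ℝ => ∏ k, (1 + a k * t)) (∑ k, a k) 0 := by
    have h := HasDerivAt.fun_finsetProd (u := Finset.univ)
      (f := fun (k : Fin n) (t : ℝ) => 1 + a k * t) (f' := fun k => a k) (x := (0:ℝ))
      (fun i _ => by
        simpa using ((hasDerivAt_id (0:ℝ)).const_mul (a i)))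
    refine h.congr_deriv ?_
    simp
  have hprodval : (∏ k, (1 + a k * (0:ℝ))) = 1 := by simp
  have hrpow : HasDerivAt (fun y : ℝ => y ^ ((n:ℝ)⁻¹))
      ((n:ℝ)⁻¹ * (1:ℝ) ^ ((n:ℝ)⁻¹ - 1)) (∏ k, (1 + a k * (0:ℝ))) := by
    rw [hprodval]
    exact Real.hasDerivAt_rpow_const (Or.inl one_ne_zero)
  have hfd : HasDerivAt f ((∑ k, a k) / n) 0 := by
    have h := hrpow.comp 0 hprod
    have heq : ((n:ℝ)⁻¹ * (1:ℝ) ^ ((n:ℝ)⁻¹ - 1)) * (∑ k, a k) = (∑ k, a k) / n := by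
      rw [Real.one_rpow]; ring
    rw [heq] at h
    exact h
  have hslope : Filter.Tendsto (slope f 0) (nhdsWithin 0 {(0:ℝ)}ᶜ)
      (nhds ((∑ k, a k) / n)) := hasDerivAt_iff_tendsto_slope.mp hfd
  have hinv : Filter.Tendsto (fun z : ℝ => z⁻¹) Filter.atTop (nhdsWithin 0 {(0:ℝ)}ᶜ) :=
    tendsto_inv_atTop_nhdsGT_zero.mono_right
      (nhdsWithin_mono 0 (fun x hx => ne_of_gt hx))
  have hcomp := hslope.comp hinv
  apply Filter.Tendsto.congr' _ hcomp
  filter_upwards [Filter.eventually_gt_atTop (0:ℝ)] with z hz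
  have hz' : z ≠ 0 := ne_of_gt hz
  have hf0 : f 0 = 1 := by simp [hfdef]
  have key : z * f z⁻¹ = (∏ k, (a k + z)) ^ ((n:ℝ)⁻¹) := by
    have h1 : (z ^ n) ^ ((n:ℝ)⁻¹) = z := by
      rw [← Real.rpow_natCast z n, ← Real.rpow_mul hz.le, mul_inv_cancel₀ hn', Real.rpow_one]
    calc z * (∏ k, (1 + a k * z⁻¹)) ^ ((n:ℝ)⁻¹)
        = (z ^ n) ^ ((n:ℝ)⁻¹) * (∏ k, (1 + a k * z⁻¹)) ^ ((n:ℝ)⁻¹) := by rw [h1]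
      _ = (z ^ n * ∏ k, (1 + a k * z⁻¹)) ^ ((n:ℝ)⁻¹) := by
          rw [← Real.mul_rpow (by positivity) (Finset.prod_nonneg fun k _ => by have h1 := ha k; positivity)]
      _ = (∏ k, (a k + z)) ^ ((n:ℝ)⁻¹) := by
          congr 1
          have hzn : z ^ n = ∏ _k : Fin n, z := by
            simp [Finset.prod_const]
          rw [hzn, ← Finset.prod_mul_distrib]
          refine Finset.prod_congr rfl fun k _ => ?_
          field_simp
          ring
  have : slope f 0 z⁻¹ = (∏ k, (a k + z)) ^ ((n:ℝ)⁻¹) - z := by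
    have h2 : (f z⁻¹ - 1) / (z⁻¹ - 0) = z * f z⁻¹ - z := by
      rw [sub_zero]
      field_simp
    rw [slope_def_field, hf0, h2, key]
  simpa using this
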